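/- If a category 𝔻 has all equalizers of parallel pairs except possibly some, then the category 𝔻⁺ obtained by freely adjoining an initial object has equalizers of all parallel pairs f, g : X ⇉ Y, where the equalizer of a pair with no equalizing cone in 𝔻 is the adjoined initial object ⊥. -/

import Mathlib

open CategoryTheory CategoryTheory.Limits

section Aux
variable {D : Type*} [Category D]

lemma homSubsingleton_of_to_star {c x : WithInitial D} (l : c ⟶ WithInitial.star) :
    Subsingleton (c ⟶ x) := by
  cases c with
  | of Z => exact (WithInitial.false_of_to_star l).elim
  | star =>
    cases x with
    | of W => exact ⟨fun a b => rfl⟩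
    | star => exact ⟨fun a b => rfl⟩

def liftAux {X Y : D} (f g : X ⟶ Y)
    (hn : ¬ ∃ (Z : D) (k : Z ⟶ X), k ≫ f = k ≫ g) :
    ∀ (c : WithInitial D) (ι : c ⟶ WithInitial.of X),
      (ι ≫ (WithInitial.incl (C := D)).map f = ι ≫ (WithInitial.incl (C := D)).map g) →
      (c ⟶ WithInitial.star)
  | WithInitial.of Z, ι, cond => absurd ⟨Z, ι, cond⟩ hn
  | WithInitial.star, _, _ => PUnit.unit

/-- The ⊥ fork is a limit when there is no equalizing cone in D. -/
noncomputable def botForkIsLimit {X Y : D} (f g : X ⟶ Y)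
    (hn : ¬ ∃ (Z : D) (k : Z ⟶ X), k ≫ f = k ≫ g) :
    IsLimit (Fork.ofι
      (WithInitial.starInitial.to ((WithInitial.incl (C := D)).obj X))
      (WithInitial.starInitial.hom_ext _ _)
      : Fork ((WithInitial.incl (C := D)).map f) ((WithInitial.incl (C := D)).map g)) := by
  refine Fork.IsLimit.mk _ (fun s => liftAux f g hn s.pt s.ι s.condition)
    (fun s => ?_) (fun s m _ => ?_)
  · exact (homSubsingleton_of_to_star (liftAux f g hn s.pt s.ι s.condition)).elim _ _
  · exact (homSubsingleton_of_to_star (liftAux f g hn s.pt s.ι s.condition)).elim _ _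
end Aux

section Aux2
variable {D : Type*} [Category D] {X Y : D} (f g : X ⟶ Y) [HasEqualizer f g]

noncomputable def liftAux2 :
    ∀ (c : WithInitial D) (ι : c ⟶ WithInitial.of X),
      (ι ≫ (WithInitial.incl (C := D)).map f = ι ≫ (WithInitial.incl (C := D)).map g) →
      (c ⟶ WithInitial.of (equalizer f g))
  | WithInitial.of _Z, ι, cond => equalizer.lift (f := f) (g := g) (WithInitial.down ι) cond
  | WithInitial.star, _, _ => PUnit.unit

lemma facAux2 :
    ∀ (c : WithInitial D) (ι : c ⟶ WithInitial.of X)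
      (cond : ι ≫ (WithInitial.incl (C := D)).map f = ι ≫ (WithInitial.incl (C := D)).map g),
      liftAux2 f g c ι cond ≫ (WithInitial.incl (C := D)).map (equalizer.ι f g) = ι
  | WithInitial.of _Z, ι, cond => equalizer.lift_ι (f := f) (g := g) (WithInitial.down ι) cond
  | WithInitial.star, ι, cond =>
      (homSubsingleton_of_to_star (PUnit.unit : WithInitial.star ⟶ WithInitial.star)).elim _ _

lemma uniqAux2 :
    ∀ (c : WithInitial D) (ι : c ⟶ WithInitial.of X)
      (cond : ι ≫ (WithInitial.incl (C := D)).map f = ι ≫ (WithInitial.incl (C := D)).map g)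
      (m : c ⟶ WithInitial.of (equalizer f g)),
      m ≫ (WithInitial.incl (C := D)).map (equalizer.ι f g) = ι →
      m = liftAux2 f g c ι cond
  | WithInitial.of _Z, ι, cond, m, hm =>
      equalizer.hom_ext (show WithInitial.down m ≫ equalizer.ι f g
        = equalizer.lift (f := f) (g := g) (WithInitial.down ι) cond ≫ equalizer.ι f g from by
        refine Eq.trans ?_ (equalizer.lift_ι (f := f) (g := g) (WithInitial.down ι) cond).symm; exact hm)
  | WithInitial.star, ι, cond, m, hm =>
      (homSubsingleton_of_to_star (PUnit.unit : WithInitial.star ⟶ WithInitial.star)).elim _ _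

noncomputable def eqForkIsLimit :
    IsLimit (Fork.ofι ((WithInitial.incl (C := D)).map (equalizer.ι f g))
      (by rw [← Functor.map_comp, ← Functor.map_comp, equalizer.condition])
      : Fork ((WithInitial.incl (C := D)).map f) ((WithInitial.incl (C := D)).map g)) :=
  Fork.IsLimit.mk _ (fun s => liftAux2 f g s.pt s.ι s.condition)
    (fun s => facAux2 f g s.pt s.ι s.condition)
    (fun s m hm => uniqAux2 f g s.pt s.ι s.condition m hm)
end Aux2

theorem withInitial_hasEqualizers_of_pairs
    {D : Type*} [Category D]
    (h : ∀ (X Y : D) (f g : X ⟶ Y),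
      HasEqualizer f g ∨ ¬ ∃ (Z : D) (k : Z ⟶ X), k ≫ f = k ≫ g) :
    (∀ (X Y : D) (f g : X ⟶ Y),
        HasEqualizer ((WithInitial.incl (C := D)).map f)
          ((WithInitial.incl (C := D)).map g)) ∧
    (∀ (X Y : D) (f g : X ⟶ Y),
        (¬ ∃ (Z : D) (k : Z ⟶ X), k ≫ f = k ≫ g) →
        Nonempty (IsLimit (Fork.ofι
          (WithInitial.starInitial.to ((WithInitial.incl (C := D)).obj X))
          (WithInitial.starInitial.hom_ext _ _)
          : Fork ((WithInitial.incl (C := D)).map f)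
              ((WithInitial.incl (C := D)).map g)))) := by
  constructor
  · intro X Y f g
    rcases h X Y f g with he | hn
    · haveI := he
      exact HasLimit.mk ⟨_, eqForkIsLimit f g⟩
    · exact HasLimit.mk ⟨_, botForkIsLimit f g hn⟩
  · intro X Y f g hn
    exact ⟨botForkIsLimit f g hn⟩
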